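/- Let Q be a random variable whose CDF F is continuous on ℝ, with F(q) = 0 for q ≤ 0 and F(q) = 1 for q ≥ 1, and F strictly increasing on [0,1]. Then the anomaly score AS = 1 - 2·min{F(Q), 1 - F(Q)} is uniformly distributed on (0,1). -/

import Mathlib

open MeasureTheory Set

/-- The anomaly score `AS = 1 - 2 * min (F Q) (1 - F Q)` is uniform on `(0,1)`
when `F` is the continuous CDF of `Q`, vanishing for `q ≤ 0`, equal to `1` for
`q ≥ 1`, and strictly increasing on `[0,1]`. -/
theorem anomaly_score_uniform
    {Ω : Type*} [MeasurableSpace Ω] (P : Measure Ω) [IsProbabilityMeasure P]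
    (Q : Ω → ℝ) (hQ : Measurable Q)
    (F : ℝ → ℝ) (hFcont : Continuous F)
    (hF0 : ∀ q ≤ (0 : ℝ), F q = 0) (hF1 : ∀ q ≥ (1 : ℝ), F q = 1)
    (hFmono : StrictMonoOn F (Icc (0 : ℝ) 1))
    (hCDF : ∀ x, P {ω | Q ω ≤ x} = ENNReal.ofReal (F x)) :
    Measure.map (fun ω => 1 - 2 * min (F (Q ω)) (1 - F (Q ω))) P
      = volume.restrict (Ioo (0 : ℝ) 1) := by
  have hF00 : F 0 = 0 := hF0 0 le_rfl
  have hF11 : F 1 = 1 := hF1 1 le_rfl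
  -- global monotonicity
  have hmono : Monotone F := by
    have key : ∀ x : ℝ, F x = F (min 1 (max 0 x)) := by
      intro x
      rcases le_total x 0 with h | h
      · rw [hF0 x h, max_eq_left h, min_eq_right zero_le_one, hF00]
      rcases le_total 1 x with h1 | h1
      · rw [hF1 x h1, max_eq_right h, min_eq_left h1, hF11]
      · rw [max_eq_right h, min_eq_right h1]
    intro x y hxy
    rw [key x, key y]
    refine hFmono.monotoneOn ?_ ?_ ?_
    · exact ⟨le_min zero_le_one (le_max_left 0 x), min_le_left _ _⟩
    · exact ⟨le_min zero_le_one (le_max_left 0 y), min_le_left _ _⟩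
    · exact min_le_min le_rfl (max_le_max le_rfl hxy)
  have hFge : ∀ x, 0 ≤ F x := fun x => by
    rcases le_total x 0 with h | h
    · rw [hF0 x h]
    · rw [← hF00]; exact hmono h
  have hFle : ∀ x, F x ≤ 1 := fun x => by
    rcases le_total 1 x with h | h
    · rw [hF1 x h]
    · rw [← hF11]; exact hmono h
  -- inverse points with characterizations
  have hinv : ∀ t ∈ Ioo (0 : ℝ) 1, ∃ q ∈ Ioo (0 : ℝ) 1, F q = t ∧
      (∀ y, F y ≤ t ↔ y ≤ q) ∧ (∀ y, t ≤ F y ↔ q ≤ y) := by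
    intro t ht
    have hmem : t ∈ Icc (F 0) (F 1) := by
      rw [hF00, hF11]; exact ⟨ht.1.le, ht.2.le⟩
    obtain ⟨q, hq, hFq⟩ := intermediate_value_Icc zero_le_one hFcont.continuousOn hmem
    have hq0 : 0 < q := by
      rcases hq.1.lt_or_eq with h | h
      · exact h
      · exfalso; rw [← h, hF00] at hFq; exact ht.1.ne hFq
    have hq1 : q < 1 := by
      rcases hq.2.lt_or_eq with h | h
      · exact h
      · exfalso; rw [h, hF11] at hFq; exact ht.2.ne' hFq
    refine ⟨q, ⟨hq0, hq1⟩, hFq, fun y => ⟨?_, fun h => hFq ▸ hmono h⟩,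
      fun y => ⟨?_, fun h => hFq ▸ hmono h⟩⟩
    · intro h
      by_contra hy
      push_neg at hy
      rcases le_total 1 y with h1 | h1
      · rw [hF1 y h1] at h; exact absurd h (not_le.2 ht.2)
      · have := hFmono hq ⟨(hq0.trans hy).le, h1⟩ hy
        rw [hFq] at this; exact absurd h (not_le.2 this)
    · intro h
      by_contra hy
      push_neg at hy
      rcases le_total y 0 with h0 | h0
      · rw [hF0 y h0] at h; exact absurd h (not_le.2 ht.1)
      · have := hFmono ⟨h0, (hy.trans hq1).le⟩ hq hy
        rw [hFq] at this; exact absurd h (not_le.2 this)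
  -- left-limit of CDF
  have hlt : ∀ x : ℝ, P {ω | Q ω < x} = ENNReal.ofReal (F x) := by
    intro x
    set s : ℕ → Set Ω := fun n => {ω | Q ω ≤ x - ((n : ℝ) + 1)⁻¹} with hs
    have hmonos : Monotone s := by
      intro m n hmn ω hω
      simp only [hs, mem_setOf_eq] at hω ⊢
      have : ((n : ℝ) + 1)⁻¹ ≤ ((m : ℝ) + 1)⁻¹ := by
        apply inv_anti₀ (by positivity)
        exact_mod_cast Nat.add_le_add_right hmn 1
      linarith
    have hunion : (⋃ n, s n) = {ω | Q ω < x} := by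
      ext ω
      simp only [mem_iUnion, mem_setOf_eq, hs]
      constructor
      · rintro ⟨n, hn⟩
        have : (0 : ℝ) < ((n : ℝ) + 1)⁻¹ := by positivity
        linarith
      · intro h
        obtain ⟨n, hn⟩ := exists_nat_one_div_lt (sub_pos.2 h)
        refine ⟨n, ?_⟩
        rw [one_div] at hn
        linarith
    have h1 : Filter.Tendsto (fun n => P (s n)) Filter.atTop (nhds (P (⋃ n, s n))) :=
      tendsto_measure_iUnion_atTop hmonos
    have h2 : Filter.Tendsto (fun n => P (s n)) Filter.atTop
        (nhds (ENNReal.ofReal (F x))) := by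
      simp only [hs, hCDF]
      refine (ENNReal.continuous_ofReal.tendsto (F x)).comp ?_
      refine (hFcont.tendsto x).comp ?_
      have : Filter.Tendsto (fun n : ℕ => x - ((n : ℝ) + 1)⁻¹) Filter.atTop (nhds (x - 0)) := by
        refine Filter.Tendsto.sub tendsto_const_nhds ?_
        simpa only [one_div] using tendsto_one_div_add_atTop_nhds_zero_nat (𝕜 := ℝ)
      simpa using this
    rw [← hunion]
    exact tendsto_nhds_unique h1 h2
  have hpoint : ∀ q : ℝ, P {ω | Q ω = q} = 0 := by
    intro q
    have hsub : {ω | Q ω = q} = {ω | Q ω ≤ q} \ {ω | Q ω < q} := by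
      ext ω; simp only [mem_setOf_eq, mem_diff, not_lt]
      constructor
      · rintro rfl; exact ⟨le_rfl, le_rfl⟩
      · rintro ⟨h1, h2⟩; exact le_antisymm h1 h2
    rw [hsub, measure_diff (s₁ := {ω | Q ω ≤ q}) (s₂ := {ω | Q ω < q}) (setOf_subset_setOf.2 fun ω => le_of_lt)
        (hQ measurableSet_Iio).nullMeasurableSet (measure_ne_top P _),
      hCDF, hlt, tsub_self]
  -- measurability of the anomaly score
  have hmeas : Measurable fun ω => 1 - 2 * min (F (Q ω)) (1 - F (Q ω)) := by
    have hG : Measurable fun ω => F (Q ω) := hFcont.measurable.comp hQ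
    exact measurable_const.sub ((hG.min (measurable_const.sub hG)).const_mul 2)
  haveI : IsProbabilityMeasure (Measure.map
      (fun ω => 1 - 2 * min (F (Q ω)) (1 - F (Q ω))) P) :=
    Measure.isProbabilityMeasure_map hmeas.aemeasurable
  refine Measure.ext_of_Iic _ _ (fun a => ?_)
  rw [Measure.map_apply hmeas measurableSet_Iic, Measure.restrict_apply measurableSet_Iic]
  rcases le_or_gt a 0 with ha0 | ha0
  · -- a ≤ 0 : both sides zero
    have hr : Iic a ∩ Ioo (0 : ℝ) 1 = ∅ := by
      ext x
      simp only [mem_inter_iff, mem_Iic, mem_Ioo, mem_empty_iff_false, iff_false]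
      rintro ⟨h1, h2, _⟩; linarith
    rw [hr, measure_empty]
    obtain ⟨q, hqm, hFq, hiff1, hiff2⟩ := hinv (1/2) (by norm_num)
    refine measure_mono_null ?_ (hpoint q)
    intro ω hω
    simp only [mem_preimage, mem_Iic] at hω
    have h1 : (1:ℝ)/2 ≤ F (Q ω) := by
      rcases min_cases (F (Q ω)) (1 - F (Q ω)) with ⟨he, _⟩ | ⟨he, hc⟩ <;> rw [he] at hω <;> linarith
    have h2 : F (Q ω) ≤ 1/2 := by
      rcases min_cases (F (Q ω)) (1 - F (Q ω)) with ⟨he, hc⟩ | ⟨he, _⟩ <;> rw [he] at hω <;> linarith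
    have : F (Q ω) = 1/2 := le_antisymm h2 h1
    exact le_antisymm ((hiff1 _).1 this.le) ((hiff2 _).1 this.ge)
  rcases lt_or_ge a 1 with ha1 | ha1
  · -- 0 < a < 1
    have hl : (1 - a)/2 ∈ Ioo (0:ℝ) 1 := by constructor <;> [linarith; linarith]
    have hu : (1 + a)/2 ∈ Ioo (0:ℝ) 1 := by constructor <;> [linarith; linarith]
    obtain ⟨q₁, hq₁m, hFq₁, hiff1l, hiff1r⟩ := hinv _ hl
    obtain ⟨q₂, hq₂m, hFq₂, hiff2l, hiff2r⟩ := hinv _ hu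
    have hq12 : q₁ ≤ q₂ := (hiff2l q₁).1 (by rw [hFq₁]; linarith)
    have hset : (fun ω => 1 - 2 * min (F (Q ω)) (1 - F (Q ω))) ⁻¹' Iic a
        = {ω | Q ω ≤ q₂} \ {ω | Q ω < q₁} := by
      ext ω
      simp only [mem_preimage, mem_Iic, mem_diff, mem_setOf_eq, not_lt]
      constructor
      · intro hω
        have h1 : (1 - a)/2 ≤ F (Q ω) := by
          rcases min_cases (F (Q ω)) (1 - F (Q ω)) with ⟨he, _⟩ | ⟨he, hc⟩ <;>
            rw [he] at hω <;> linarith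
        have h2 : F (Q ω) ≤ (1 + a)/2 := by
          rcases min_cases (F (Q ω)) (1 - F (Q ω)) with ⟨he, hc⟩ | ⟨he, _⟩ <;>
            rw [he] at hω <;> linarith
        exact ⟨(hiff2l _).1 h2, (hiff1r _).1 h1⟩
      · rintro ⟨h2, h1⟩
        have h2' : F (Q ω) ≤ (1 + a)/2 := (hiff2l _).2 h2
        have h1' : (1 - a)/2 ≤ F (Q ω) := (hiff1r _).2 h1
        rcases min_cases (F (Q ω)) (1 - F (Q ω)) with ⟨he, _⟩ | ⟨he, _⟩ <;>
          rw [he] <;> linarith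
    rw [hset, measure_diff (s₁ := {ω | Q ω ≤ q₂}) (s₂ := {ω | Q ω < q₁})
        (setOf_subset_setOf.2 fun ω h => le_trans (le_of_lt h) hq12)
        (hQ measurableSet_Iio).nullMeasurableSet (measure_ne_top P _),
      hCDF, hlt, hFq₁, hFq₂]
    have hr : Iic a ∩ Ioo (0 : ℝ) 1 = Ioc 0 a := by
      ext x
      simp only [mem_inter_iff, mem_Iic, mem_Ioo, mem_Ioc]
      constructor
      · rintro ⟨h1, h2, _⟩; exact ⟨h2, h1⟩
      · rintro ⟨h1, h2⟩; exact ⟨h2, h1, lt_of_le_of_lt h2 ha1⟩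
    rw [hr, Real.volume_Ioc, ← ENNReal.ofReal_sub _ (by linarith)]
    ring_nf
  · -- a ≥ 1
    have hset : (fun ω => 1 - 2 * min (F (Q ω)) (1 - F (Q ω))) ⁻¹' Iic a = univ := by
      ext ω
      simp only [mem_preimage, mem_Iic, mem_univ, iff_true]
      have h1 := hFge (Q ω); have h2 := hFle (Q ω)
      rcases min_cases (F (Q ω)) (1 - F (Q ω)) with ⟨he, _⟩ | ⟨he, _⟩ <;> rw [he] <;> linarith
    have hr : Iic a ∩ Ioo (0 : ℝ) 1 = Ioo 0 1 := by
      ext x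
      simp only [mem_inter_iff, mem_Iic, mem_Ioo, and_iff_right_iff_imp]
      rintro ⟨_, h2⟩; linarith
    rw [hset, hr, measure_univ, Real.volume_Ioo]
    norm_num
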